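/- For exchangeable real-valued scores S_1, …, S_{n+1} (exchangeable joint distribution), the normalized rank T = (1/(n+1)) Σ_{i=1}^{n+1} 1{S_i ≤ S_{n+1}} satisfies P{T ≤ α} ≤ α for every α ∈ [0,1]. -/

import Mathlib

open MeasureTheory Set
open scoped Classical
open scoped ENNReal

namespace Stmt13Aux

/-- The rank of coordinate `j` in the vector `s`. -/
noncomputable def rk (n : ℕ) (s : Fin (n + 1) → ℝ) (j : Fin (n + 1)) : ℕ :=
  (Finset.univ.filter (fun i => s i ≤ s j)).card

lemma measurable_rk (n : ℕ) (j : Fin (n + 1)) :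
    Measurable (fun s : Fin (n + 1) → ℝ => rk n s j) := by
  have h : (fun s : Fin (n + 1) → ℝ => rk n s j)
      = fun s => ∑ i : Fin (n + 1), if s i ≤ s j then 1 else 0 := by
    funext s; exact Finset.card_filter _ _
  rw [h]
  refine Finset.measurable_sum _ (fun i _ => ?_)
  exact Measurable.ite
    (measurableSet_le (measurable_pi_apply i) (measurable_pi_apply j))
    measurable_const measurable_const

lemma count_le (n k : ℕ) (s : Fin (n + 1) → ℝ) :
    (Finset.univ.filter (fun j => rk n s j ≤ k)).card ≤ k := by
  set A := Finset.univ.filter (fun j => rk n s j ≤ k) with hA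
  rcases A.eq_empty_or_nonempty with h | h
  · simp [h]
  · obtain ⟨j, hjA, hj⟩ := Finset.exists_max_image A s h
    have hsub : A ⊆ Finset.univ.filter (fun i => s i ≤ s j) := by
      intro a ha
      simp only [Finset.mem_filter, Finset.mem_univ, true_and]
      exact hj a ha
    calc A.card ≤ (Finset.univ.filter (fun i => s i ≤ s j)).card :=
          Finset.card_le_card hsub
      _ = rk n s j := rfl
      _ ≤ k := by
          have := Finset.mem_filter.mp (hA ▸ hjA)
          exact this.2

lemma rk_comp (n : ℕ) (s : Fin (n + 1) → ℝ) (σ : Equiv.Perm (Fin (n + 1)))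
    (j : Fin (n + 1)) : rk n (s ∘ σ) j = rk n s (σ j) := by
  unfold rk
  exact Finset.card_equiv σ (by intro i; simp)

end Stmt13Aux

/-- For exchangeable real-valued scores `S_1, …, S_{n+1}`, the normalized rank
`T = (1/(n+1)) Σ_i 1{S_i ≤ S_{n+1}}` satisfies `P{T ≤ α} ≤ α` for `α ∈ [0,1]`. -/
theorem stmt13 {Ω : Type*} [MeasurableSpace Ω] (P : Measure Ω)
    [IsProbabilityMeasure P] (n : ℕ)
    (S : Ω → Fin (n + 1) → ℝ) (hS : Measurable S)
    (exch : ∀ σ : Equiv.Perm (Fin (n + 1)),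
      P.map (fun ω => S ω ∘ σ) = P.map S)
    (T : Ω → ℝ)
    (hT : ∀ ω, T ω =
      ((Finset.univ.filter
          (fun i : Fin (n + 1) => S ω i ≤ S ω (Fin.last n))).card : ℝ) / (n + 1)) :
    ∀ α : ℝ, α ∈ Set.Icc (0 : ℝ) 1 →
      P {ω | T ω ≤ α} ≤ ENNReal.ofReal α := by
  intro α hα
  obtain ⟨hα0, hα1⟩ := hα
  set k := ⌊α * (n + 1)⌋₊ with hk
  have hαn : (0 : ℝ) ≤ α * (n + 1) := mul_nonneg hα0 (by positivity)
  -- rewrite the event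
  have hevent : {ω | T ω ≤ α} = {ω | Stmt13Aux.rk n (S ω) (Fin.last n) ≤ k} := by
    ext ω
    simp only [Set.mem_setOf_eq, hT ω]
    rw [div_le_iff₀ (by positivity), hk, Nat.le_floor_iff hαn]
    constructor
    · intro h
      simpa [Stmt13Aux.rk] using h
    · intro h
      simpa [Stmt13Aux.rk] using h
  rw [hevent]
  -- measurability
  have hmeas : ∀ j : Fin (n + 1),
      MeasurableSet {s : Fin (n + 1) → ℝ | Stmt13Aux.rk n s j ≤ k} := by
    intro j
    exact (Stmt13Aux.measurable_rk n j) measurableSet_Iic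
  have hmeasΩ : ∀ j : Fin (n + 1),
      MeasurableSet {ω | Stmt13Aux.rk n (S ω) j ≤ k} := by
    intro j
    exact hS (hmeas j)
  have hS' : ∀ σ : Equiv.Perm (Fin (n + 1)), Measurable (fun ω => S ω ∘ σ) := by
    intro σ
    exact measurable_pi_iff.mpr (fun i => (measurable_pi_apply (σ i)).comp hS)
  -- exchangeability: each rank event has the same probability
  have key : ∀ j : Fin (n + 1),
      P {ω | Stmt13Aux.rk n (S ω) j ≤ k}
        = P {ω | Stmt13Aux.rk n (S ω) (Fin.last n) ≤ k} := by
    intro j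
    set σ := Equiv.swap j (Fin.last n) with hσ
    have e1 : P {ω | Stmt13Aux.rk n (S ω ∘ σ) (Fin.last n) ≤ k}
        = (P.map (fun ω => S ω ∘ σ)) {s | Stmt13Aux.rk n s (Fin.last n) ≤ k} := by
      rw [Measure.map_apply (hS' σ) (hmeas _)]
      rfl
    have e2 : P {ω | Stmt13Aux.rk n (S ω) (Fin.last n) ≤ k}
        = (P.map S) {s | Stmt13Aux.rk n s (Fin.last n) ≤ k} := by
      rw [Measure.map_apply hS (hmeas _)]
      rfl
    have h1 : P {ω | Stmt13Aux.rk n (S ω ∘ σ) (Fin.last n) ≤ k}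
        = P {ω | Stmt13Aux.rk n (S ω) (Fin.last n) ≤ k} := by
      rw [e1, e2, exch σ]
    rw [← h1]
    congr 1
    ext ω
    simp only [Set.mem_setOf_eq, Stmt13Aux.rk_comp, hσ, Equiv.swap_apply_right]
  -- sum of the probabilities is at most k
  have hsum : ∑ j : Fin (n + 1), P {ω | Stmt13Aux.rk n (S ω) j ≤ k}
      ≤ (k : ℝ≥0∞) := by
    have heq : ∀ j : Fin (n + 1), P {ω | Stmt13Aux.rk n (S ω) j ≤ k}
        = ∫⁻ ω, Set.indicator {ω | Stmt13Aux.rk n (S ω) j ≤ k}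
            (fun _ => (1 : ℝ≥0∞)) ω ∂P := by
      intro j
      rw [lintegral_indicator (hmeasΩ j)]
      simp
    calc ∑ j : Fin (n + 1), P {ω | Stmt13Aux.rk n (S ω) j ≤ k}
        = ∑ j : Fin (n + 1), ∫⁻ ω, Set.indicator
            {ω | Stmt13Aux.rk n (S ω) j ≤ k} (fun _ => (1 : ℝ≥0∞)) ω ∂P := by
          exact Finset.sum_congr rfl (fun j _ => heq j)
      _ = ∫⁻ ω, ∑ j : Fin (n + 1), Set.indicator
            {ω | Stmt13Aux.rk n (S ω) j ≤ k} (fun _ => (1 : ℝ≥0∞)) ω ∂P := by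
          rw [← lintegral_finset_sum]
          intro j _
          exact (measurable_const.indicator (hmeasΩ j))
      _ ≤ ∫⁻ _, (k : ℝ≥0∞) ∂P := by
          refine lintegral_mono (fun ω => ?_)
          have : ∑ j : Fin (n + 1), Set.indicator
              {ω | Stmt13Aux.rk n (S ω) j ≤ k} (fun _ => (1 : ℝ≥0∞)) ω
              = ((Finset.univ.filter
                  (fun j => Stmt13Aux.rk n (S ω) j ≤ k)).card : ℝ≥0∞) := by
            rw [Finset.card_filter]
            push_cast
            refine Finset.sum_congr rfl (fun j _ => ?_)
            simp [Set.indicator_apply]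
          rw [this]
          exact Nat.cast_le.mpr (by convert Stmt13Aux.count_le n k (S ω))
      _ = (k : ℝ≥0∞) := by simp
  -- conclude
  have hmain : ((n : ℝ≥0∞) + 1) * P {ω | Stmt13Aux.rk n (S ω) (Fin.last n) ≤ k}
      ≤ (k : ℝ≥0∞) := by
    calc ((n : ℝ≥0∞) + 1) * P {ω | Stmt13Aux.rk n (S ω) (Fin.last n) ≤ k}
        = ∑ _j : Fin (n + 1), P {ω | Stmt13Aux.rk n (S ω) (Fin.last n) ≤ k} := by
          simp [Finset.sum_const, mul_comm, nsmul_eq_mul]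
      _ = ∑ j : Fin (n + 1), P {ω | Stmt13Aux.rk n (S ω) j ≤ k} := by
          exact (Finset.sum_congr rfl (fun j _ => (key j).symm))
      _ ≤ (k : ℝ≥0∞) := hsum
  have hk' : (k : ℝ≥0∞) ≤ ENNReal.ofReal α * ((n : ℝ≥0∞) + 1) := by
    have h1 : (k : ℝ) ≤ α * (n + 1) := Nat.floor_le hαn
    calc (k : ℝ≥0∞) = ENNReal.ofReal (k : ℝ) := by
          rw [ENNReal.ofReal_natCast]
      _ ≤ ENNReal.ofReal (α * (n + 1)) := ENNReal.ofReal_le_ofReal h1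
      _ = ENNReal.ofReal α * ENNReal.ofReal ((n : ℝ) + 1) := by
          rw [ENNReal.ofReal_mul hα0]
      _ = ENNReal.ofReal α * ((n : ℝ≥0∞) + 1) := by
          congr 1
          rw [ENNReal.ofReal_add (by positivity) zero_le_one]
          simp [ENNReal.ofReal_natCast]
  have hne0 : ((n : ℝ≥0∞) + 1) ≠ 0 := by simp
  have hnetop : ((n : ℝ≥0∞) + 1) ≠ ⊤ := by simp [ENNReal.add_ne_top]
  have := le_trans hmain hk'
  rw [mul_comm] at this
  exact (ENNReal.mul_le_mul_iff_left hne0 hnetop).mp this
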